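/- Let S be an n×n real symmetric matrix that is block-constant on the diagonal blocks of a partition C₁,…,C_r of {1,…,n}, with S_{ij} = a_{kk} for i,j ∈ C_k. Assume S is weakly assortative: p_gap := min_k ( a_{kk} − max_{i∈C_k, j∈C_ℓ, ℓ≠k} S_{ij} ) > 0. Let X₀ = Z₀(Z₀ᵀZ₀)⁻¹Z₀ᵀ be the normalized clustering matrix of the partition. Let X̂ be any n×n symmetric doubly substochastic nonnegative matrix with X̂ ⪰ 0, trace(X̂) = r, and each row sum of X̂ equal to 1 (so in particular for each k, Σ_{j} X̂_{ij} = 1 for i ∈ C_k). If ⟨S, X̂⟩ ≥ ⟨S, X₀⟩ − ε′ for some ε′ ≥ 0, then ‖X̂ − X₀‖_F² ≤ 2ε′ / (n·π_min·p_gap), where π_min = min_k |C_k|/n. -/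

import Mathlib

open Matrix BigOperators

/-- Frobenius norm of a real matrix. -/
noncomputable def frob {n m : ℕ} (M : Matrix (Fin n) (Fin m) ℝ) : ℝ :=
  Real.sqrt (∑ i, ∑ j, (M i j) ^ 2)

/-- Membership matrix of the partition given by a cluster assignment `c`. -/
noncomputable def memb {n r : ℕ} (c : Fin n → Fin r) : Matrix (Fin n) (Fin r) ℝ :=
  Matrix.of fun i k => if c i = k then 1 else 0

/-- Normalized clustering matrix `Z (ZᵀZ)⁻¹ Zᵀ` of the assignment `c`. -/
noncomputable def ncm {n r : ℕ} (c : Fin n → Fin r) : Matrix (Fin n) (Fin n) ℝ :=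
  memb c * ((memb c)ᵀ * memb c)⁻¹ * (memb c)ᵀ

/-- Trace inner product `⟨M, N⟩ = trace(MᵀN)`. -/
noncomputable def ip {n : ℕ} (M N : Matrix (Fin n) (Fin n) ℝ) : ℝ :=
  (Mᵀ * N).trace

lemma psd_trace_nonneg {n : ℕ} {P : Matrix (Fin n) (Fin n) ℝ} (hP : P.PosSemidef) :
    0 ≤ P.trace := by
  refine Finset.sum_nonneg fun i _ => ?_
  have := hP.dotProduct_mulVec_nonneg (Pi.single i 1)
  simpa [dotProduct, mulVec, Pi.single_apply] using this

lemma memb_tmul {n r : ℕ} (c : Fin n → Fin r) :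
    (memb c)ᵀ * memb c =
      Matrix.diagonal (fun k => ((Finset.univ.filter (fun t => c t = k)).card : ℝ)) := by
  ext k l
  simp only [Matrix.mul_apply, Matrix.transpose_apply, memb, Matrix.of_apply,
    Matrix.diagonal_apply]
  have h : ∀ t : Fin n, (if c t = k then (1:ℝ) else 0) * (if c t = l then 1 else 0)
      = if c t = k ∧ c t = l then 1 else 0 := by
    intro t; by_cases h1 : c t = k <;> by_cases h2 : c t = l <;> simp [h1, h2]
  rw [Finset.sum_congr rfl fun t _ => h t]
  rcases eq_or_ne k l with h | h
  · subst h
    simp [Finset.sum_boole]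
  · have : ∀ t : Fin n, ¬(c t = k ∧ c t = l) := by
      rintro t ⟨h1, h2⟩; exact h (h1 ▸ h2 ▸ rfl)
    simp [if_neg h, this]

lemma ncm_apply {n r : ℕ} (c : Fin n → Fin r) (hc : Function.Surjective c) (i j : Fin n) :
    ncm c i j = if c i = c j
      then ((Finset.univ.filter (fun t => c t = c i)).card : ℝ)⁻¹ else 0 := by
  set m : Fin r → ℝ := fun k => ((Finset.univ.filter (fun t => c t = k)).card : ℝ) with hm
  have hcard : ∀ k, m k ≠ 0 := by
    intro k
    obtain ⟨i0, hi0⟩ := hc k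
    have hpos : 0 < (Finset.univ.filter (fun t => c t = k)).card :=
      Finset.card_pos.mpr ⟨i0, by simp [hi0]⟩
    simp only [hm]
    exact Nat.cast_ne_zero.mpr hpos.ne'
  have hinv : ((memb c)ᵀ * memb c)⁻¹ = Matrix.diagonal (fun k => (m k)⁻¹) := by
    rw [memb_tmul]
    apply Matrix.inv_eq_right_inv
    rw [Matrix.diagonal_mul_diagonal]
    rw [← Matrix.diagonal_one]
    congr 1; funext k; exact mul_inv_cancel₀ (hcard k)
  rw [ncm, hinv]
  simp only [Matrix.mul_apply, Matrix.mul_diagonal, Matrix.transpose_apply, memb,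
    Matrix.of_apply]
  rw [Finset.sum_eq_single (c i)]
  · rcases eq_or_ne (c i) (c j) with h | h
    · simp [h.symm, hm]
    · simp [Ne.symm h, h]
  · intro b _ hb
    simp [Ne.symm hb]
  · simp

lemma ip_eq_sum {n : ℕ} (M N : Matrix (Fin n) (Fin n) ℝ) :
    ip M N = ∑ i, ∑ j, M i j * N i j := by
  simp only [ip, Matrix.trace, Matrix.diag, Matrix.mul_apply, Matrix.transpose_apply]
  exact Finset.sum_comm

lemma one_sub_psd {n : ℕ} (Xhat : Matrix (Fin n) (Fin n) ℝ)
    (hpsd : Xhat.PosSemidef) (hnonneg : ∀ i j, 0 ≤ Xhat i j)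
    (hrowsum : ∀ i, ∑ j, Xhat i j = 1) : (1 - Xhat).PosSemidef := by
  have hsymm : ∀ i j, Xhat i j = Xhat j i := by
    intro i j
    have := hpsd.1
    rw [Matrix.IsHermitian] at this
    conv_lhs => rw [← this]
    simp [Matrix.conjTranspose_apply]
  refine Matrix.PosSemidef.of_dotProduct_mulVec_nonneg ?_ ?_
  · exact Matrix.isHermitian_one.sub hpsd.1
  · intro x
    have hcol : ∀ j, ∑ i, Xhat i j = 1 := by
      intro j
      rw [Finset.sum_congr rfl fun i _ => hsymm i j]
      exact hrowsum j
    have expand : ∑ i, ∑ j, Xhat i j * (x i - x j) ^ 2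
        = (∑ i, x i ^ 2) - 2 * (∑ i, ∑ j, Xhat i j * (x i * x j)) + ∑ j, x j ^ 2 := by
      have h1 : ∀ i j, Xhat i j * (x i - x j) ^ 2
          = Xhat i j * x i ^ 2 - 2 * (Xhat i j * (x i * x j)) + Xhat i j * x j ^ 2 := by
        intro i j; ring
      simp_rw [h1, Finset.sum_add_distrib, Finset.sum_sub_distrib, ← Finset.mul_sum]
      have hA : ∑ i, ∑ j, Xhat i j * x i ^ 2 = ∑ i, x i ^ 2 := by
        refine Finset.sum_congr rfl fun i _ => ?_
        rw [← Finset.sum_mul, hrowsum i, one_mul]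
      have hC : ∑ i, ∑ j, Xhat i j * x j ^ 2 = ∑ j, x j ^ 2 := by
        rw [Finset.sum_comm]
        refine Finset.sum_congr rfl fun j _ => ?_
        rw [← Finset.sum_mul, hcol j, one_mul]
      rw [hA, hC]
    have key : dotProduct (star x) ((1 - Xhat) *ᵥ x)
        = (1 / 2) * ∑ i, ∑ j, Xhat i j * (x i - x j) ^ 2 := by
      rw [expand]
      rw [show (1 - Xhat) *ᵥ x = x - Xhat *ᵥ x by rw [Matrix.sub_mulVec, Matrix.one_mulVec]]
      simp only [star_trivial, dotProduct, Pi.sub_apply, Matrix.mulVec]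
      have h2 : ∀ i, x i * (x i - ∑ j, Xhat i j * x j)
          = x i ^ 2 - ∑ j, Xhat i j * (x i * x j) := by
        intro i
        rw [mul_sub, Finset.mul_sum]
        congr 1
        · ring
        · exact Finset.sum_congr rfl fun j _ => by ring
      simp_rw [h2, Finset.sum_sub_distrib]
      ring
    rw [key]
    have : 0 ≤ ∑ i, ∑ j, Xhat i j * (x i - x j) ^ 2 :=
      Finset.sum_nonneg fun i _ => Finset.sum_nonneg fun j _ =>
        mul_nonneg (hnonneg i j) (sq_nonneg _)
    linarith

open scoped MatrixOrder in
lemma trace_sq_le {n : ℕ} (Xhat : Matrix (Fin n) (Fin n) ℝ)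
    (hpsd : Xhat.PosSemidef) (h1 : (1 - Xhat).PosSemidef) :
    (Xhat * Xhat).trace ≤ Xhat.trace := by
  have h0 : 0 ≤ (Xhat * (1 - Xhat)).trace := by
    have hQQ : CFC.sqrt Xhat * CFC.sqrt Xhat = Xhat := CFC.sqrt_mul_sqrt_self Xhat hpsd.nonneg
    have hherm : (CFC.sqrt Xhat)ᴴ = CFC.sqrt Xhat := (CFC.sqrt_nonneg Xhat).posSemidef.1
    have hrw : Xhat * (1 - Xhat) = CFC.sqrt Xhat * (CFC.sqrt Xhat * (1 - Xhat)) := by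
      rw [← Matrix.mul_assoc, hQQ]
    rw [hrw, Matrix.trace_mul_comm]
    have hpsd2 := h1.conjTranspose_mul_mul_same (CFC.sqrt Xhat)
    rw [hherm] at hpsd2
    exact psd_trace_nonneg hpsd2
  have heq : (Xhat * (1 - Xhat)).trace = Xhat.trace - (Xhat * Xhat).trace := by
    rw [Matrix.mul_sub, Matrix.mul_one, Matrix.trace_sub]
  linarith

theorem stmt8 {n r : ℕ} (hn : 0 < n) (hr : 0 < r)
    (c : Fin n → Fin r) (hc : Function.Surjective c)
    (S : Matrix (Fin n) (Fin n) ℝ) (hSsym : S.IsSymm)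
    (a : Fin r → ℝ)
    (hblock : ∀ i j, c i = c j → S i j = a (c i))
    (pgap : ℝ) (hpgap : 0 < pgap)
    (hassort : ∀ i j, c i ≠ c j → S i j ≤ a (c i) - pgap)
    (Xhat : Matrix (Fin n) (Fin n) ℝ)
    (hsym : Xhat.IsSymm) (hpsd : Xhat.PosSemidef)
    (hnonneg : ∀ i j, 0 ≤ Xhat i j)
    (htrace : Xhat.trace = (r : ℝ))
    (hrowsum : ∀ i, ∑ j, Xhat i j = 1)
    (ε' : ℝ) (hε' : 0 ≤ ε')
    (hineq : ip S Xhat ≥ ip S (ncm c) - ε') :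
    (frob (Xhat - ncm c)) ^ 2 ≤
      2 * ε' / ((n : ℝ) *
        (Finset.univ.inf' (@Finset.univ_nonempty _ _ (Fin.pos_iff_nonempty.mp hr))
          (fun k => ((Finset.univ.filter (fun i => c i = k)).card : ℝ) / n)) * pgap) := by
  classical
  have hne : (Finset.univ : Finset (Fin r)).Nonempty :=
    @Finset.univ_nonempty _ _ (Fin.pos_iff_nonempty.mp hr)
  set m : Fin r → ℝ := fun k => ((Finset.univ.filter (fun i => c i = k)).card : ℝ) with hmdef
  have h1m : ∀ k, 1 ≤ m k := by
    intro k
    obtain ⟨i0, hi0⟩ := hc k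
    have : 0 < (Finset.univ.filter (fun i => c i = k)).card :=
      Finset.card_pos.mpr ⟨i0, by simp [hi0]⟩
    exact Nat.one_le_cast.mpr this
  have hm0 : ∀ k, m k ≠ 0 := fun k => by have := h1m k; intro h; rw [h] at this; linarith
  set mmin : ℝ := Finset.univ.inf' hne m with hmm
  have hmmin1 : (1 : ℝ) ≤ mmin := Finset.le_inf' _ _ fun k _ => h1m k
  have hmminpos : (0 : ℝ) < mmin := lt_of_lt_of_le one_pos hmmin1
  have hmmin_le : ∀ k, mmin ≤ m k := fun k => Finset.inf'_le _ (Finset.mem_univ k)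
  -- denominator simplification
  have hden : (n : ℝ) *
      (Finset.univ.inf' (@Finset.univ_nonempty _ _ (Fin.pos_iff_nonempty.mp hr))
        (fun k => ((Finset.univ.filter (fun i => c i = k)).card : ℝ) / n)) * pgap
      = mmin * pgap := by
    have hnn : (0:ℝ) ≤ (n:ℝ) := Nat.cast_nonneg n
    have : Finset.univ.inf' hne (fun k => m k / n) = mmin / n := by
      rw [hmm]
      exact (Finset.apply_inf'_eq_inf'_comp hne (fun x : ℝ => x / n)
        (fun a b => (min_div_div_right hnn a b).symm)).symm
    rw [show (Finset.univ.inf' (@Finset.univ_nonempty _ _ (Fin.pos_iff_nonempty.mp hr))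
        (fun k => ((Finset.univ.filter (fun i => c i = k)).card : ℝ) / n)) =
        Finset.univ.inf' hne (fun k => m k / n) from rfl, this]
    field_simp
  -- basic fiber facts
  have hX0 : ∀ i j, ncm c i j = if c i = c j then (m (c i))⁻¹ else 0 :=
    fun i j => ncm_apply c hc i j
  have hfsum : ∀ (i : Fin n) (κ : ℝ), (∑ j, if c i = c j then κ else 0) = m (c i) * κ := by
    intro i κ
    have hfil : Finset.univ.filter (fun j => c i = c j)
        = Finset.univ.filter (fun t => c t = c i) := by
      ext t; simp [eq_comm]
    rw [Finset.sum_ite, Finset.sum_const, Finset.sum_const_zero, add_zero, nsmul_eq_mul, hfil]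
  have hinvsum : ∑ i, (m (c i))⁻¹ = (r : ℝ) := by
    have h2 : ∀ k : Fin r, ∑ _i ∈ Finset.univ.filter (fun i => c i = k), (m k)⁻¹ = 1 := by
      intro k
      rw [Finset.sum_const, nsmul_eq_mul]
      exact mul_inv_cancel₀ (hm0 k)
    calc ∑ i, (m (c i))⁻¹
        = ∑ k : Fin r, ∑ _i ∈ Finset.univ.filter (fun i => c i = k), (m k)⁻¹ :=
          (Finset.sum_fiberwise' (Finset.univ : Finset (Fin n)) c (fun k => (m k)⁻¹)).symm
      _ = ∑ _k : Fin r, (1:ℝ) := Finset.sum_congr rfl fun k _ => h2 k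
      _ = (r : ℝ) := by simp
  -- off-diagonal mass
  set B : ℝ := ∑ i, ∑ j, (if c i = c j then 0 else Xhat i j) with hBdef
  have hB0 : 0 ≤ B :=
    Finset.sum_nonneg fun i _ => Finset.sum_nonneg fun j _ => by
      by_cases h : c i = c j <;> simp [h, hnonneg i j]
  -- within-row split
  have hsplit : ∀ i, (∑ j, if c i = c j then Xhat i j else 0)
      = 1 - ∑ j, (if c i = c j then 0 else Xhat i j) := by
    intro i
    have : (∑ j, if c i = c j then Xhat i j else 0)
        + ∑ j, (if c i = c j then 0 else Xhat i j) = 1 := by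
      rw [← Finset.sum_add_distrib, ← hrowsum i]
      refine Finset.sum_congr rfl fun j _ => ?_
      by_cases h : c i = c j <;> simp [h]
    linarith
  -- gap inequality
  have hipX0 : ip S (ncm c) = ∑ i, a (c i) := by
    rw [ip_eq_sum]
    refine Finset.sum_congr rfl fun i _ => ?_
    have h1 : ∀ j, S i j * ncm c i j = if c i = c j then a (c i) * (m (c i))⁻¹ else 0 := by
      intro j
      rw [hX0 i j]
      by_cases h : c i = c j
      · simp [h, hblock i j h]
      · simp [h]
    rw [Finset.sum_congr rfl fun j _ => h1 j, hfsum]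
    rw [mul_comm (a (c i)) (m (c i))⁻¹, ← mul_assoc, mul_inv_cancel₀ (hm0 (c i)), one_mul]
  have hipXhat : ip S Xhat ≤ (∑ i, a (c i)) - pgap * B := by
    rw [ip_eq_sum]
    have hterm : ∀ i j, S i j * Xhat i j
        ≤ a (c i) * Xhat i j - pgap * (if c i = c j then 0 else Xhat i j) := by
      intro i j
      by_cases h : c i = c j
      · simp [h, hblock i j h]
      · simp only [if_neg h]
        have h2 := mul_le_mul_of_nonneg_right (hassort i j h) (hnonneg i j)
        nlinarith [h2]
    calc ∑ i, ∑ j, S i j * Xhat i j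
        ≤ ∑ i, ∑ j, (a (c i) * Xhat i j - pgap * (if c i = c j then 0 else Xhat i j)) :=
          Finset.sum_le_sum fun i _ => Finset.sum_le_sum fun j _ => hterm i j
      _ = (∑ i, a (c i)) - pgap * B := by
          rw [hBdef, Finset.mul_sum, ← Finset.sum_sub_distrib]
          refine Finset.sum_congr rfl fun i _ => ?_
          rw [Finset.sum_sub_distrib, ← Finset.mul_sum, ← Finset.mul_sum, hrowsum i, mul_one]
  have hgapB : pgap * B ≤ ε' := by
    rw [hipX0] at hineq
    linarith [hipXhat]
  -- frobenius bound
  have hfrob : (frob (Xhat - ncm c)) ^ 2 ≤ 2 * B / mmin := by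
    have hsq : (frob (Xhat - ncm c)) ^ 2 = ∑ i, ∑ j, (Xhat i j - ncm c i j) ^ 2 := by
      rw [frob, Real.sq_sqrt]
      · refine Finset.sum_congr rfl fun i _ => Finset.sum_congr rfl fun j _ => ?_
        rw [Matrix.sub_apply]
      · exact Finset.sum_nonneg fun i _ => Finset.sum_nonneg fun j _ => sq_nonneg _
    have hXsq : ∑ i, ∑ j, (Xhat i j) ^ 2 ≤ (r : ℝ) := by
      have h1 : ∑ i, ∑ j, (Xhat i j) ^ 2 = (Xhat * Xhat).trace := by
        simp only [Matrix.trace, Matrix.diag, Matrix.mul_apply]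
        refine Finset.sum_congr rfl fun i _ => Finset.sum_congr rfl fun j _ => ?_
        rw [hsym.apply i j, sq]
      rw [h1, ← htrace]
      exact trace_sq_le Xhat hpsd (one_sub_psd Xhat hpsd hnonneg hrowsum)
    have hX0sq : ∑ i, ∑ j, (ncm c i j) ^ 2 = (r : ℝ) := by
      rw [← hinvsum]
      refine Finset.sum_congr rfl fun i _ => ?_
      have h1 : ∀ j, (ncm c i j) ^ 2 = if c i = c j then ((m (c i))⁻¹)^2 else 0 := by
        intro j
        rw [hX0 i j]
        by_cases h : c i = c j <;> simp [h]
      rw [Finset.sum_congr rfl fun j _ => h1 j, hfsum]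
      rw [sq, ← mul_assoc, mul_inv_cancel₀ (hm0 (c i)), one_mul]
    have hcross : (r : ℝ) - B / mmin ≤ ∑ i, ∑ j, Xhat i j * ncm c i j := by
      have h1 : ∀ i, ∑ j, Xhat i j * ncm c i j
          = (m (c i))⁻¹ * (1 - ∑ j, (if c i = c j then 0 else Xhat i j)) := by
        intro i
        rw [← hsplit i, Finset.mul_sum]
        refine Finset.sum_congr rfl fun j _ => ?_
        rw [hX0 i j]
        by_cases h : c i = c j <;> simp [h] <;> ring
      rw [Finset.sum_congr rfl fun i _ => h1 i]
      have h2 : ∀ i, (m (c i))⁻¹ - mmin⁻¹ * (∑ j, (if c i = c j then 0 else Xhat i j))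
          ≤ (m (c i))⁻¹ * (1 - ∑ j, (if c i = c j then 0 else Xhat i j)) := by
        intro i
        have hd0 : 0 ≤ ∑ j, (if c i = c j then 0 else Xhat i j) :=
          Finset.sum_nonneg fun j _ => by by_cases h : c i = c j <;> simp [h, hnonneg i j]
        have hle : (m (c i))⁻¹ ≤ mmin⁻¹ := by
          rw [← one_div, ← one_div]
          exact one_div_le_one_div_of_le hmminpos (hmmin_le (c i))
        nlinarith [mul_le_mul_of_nonneg_right hle hd0]
      calc (r : ℝ) - B / mmin
          = ∑ i, ((m (c i))⁻¹ - mmin⁻¹ * (∑ j, (if c i = c j then 0 else Xhat i j))) := by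
            rw [Finset.sum_sub_distrib, hinvsum, ← Finset.mul_sum, ← hBdef, div_eq_inv_mul]
        _ ≤ _ := Finset.sum_le_sum fun i _ => h2 i
    have hexp : ∑ i, ∑ j, (Xhat i j - ncm c i j) ^ 2
        = (∑ i, ∑ j, (Xhat i j) ^ 2) - 2 * (∑ i, ∑ j, Xhat i j * ncm c i j)
          + ∑ i, ∑ j, (ncm c i j) ^ 2 := by
      have h1 : ∀ i j, (Xhat i j - ncm c i j) ^ 2
          = (Xhat i j) ^ 2 - 2 * (Xhat i j * ncm c i j) + (ncm c i j) ^ 2 := by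
        intro i j; ring
      simp_rw [h1, Finset.sum_add_distrib, Finset.sum_sub_distrib, ← Finset.mul_sum]
    rw [hsq, hexp]
    have : 2 * B / mmin = 2 * (B / mmin) := by ring
    rw [this]
    nlinarith [hcross, hXsq, hX0sq]
  -- conclude
  rw [hden]
  calc (frob (Xhat - ncm c)) ^ 2 ≤ 2 * B / mmin := hfrob
    _ ≤ 2 * ε' / (mmin * pgap) := by
        rw [div_le_div_iff₀ hmminpos (by positivity)]
        nlinarith [mul_le_mul_of_nonneg_left hgapB (le_of_lt hmminpos)]
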